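/- Let V be a finite p-group, U ≤ Z(V) a cyclic subgroup of order at least p, and U^p the unique subgroup of U of index p. Then the number of cosets vU ∈ V/U with ⟨v,U⟩ cyclic equals the number of cosets in (V/U^p)/(U/U^p) whose generators together with U/U^p generate a cyclic subgroup of V/U^p, i.e., c(U, V) = c(U/U^p, V/U^p). -/

import Mathlib

open Subgroup QuotientGroup Pointwise

section Aux

variable {G : Type*} [Group G]

private lemma normal_of_central {U : Subgroup G} (hZ : U ≤ Subgroup.center G) : U.Normal := by
  refine ⟨fun n hn g => ?_⟩
  have h : g * n * g⁻¹ = n := by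
    rw [Subgroup.mem_center_iff.mp (hZ hn) g]; group
  rw [h]; exact hn

private lemma sup_zpowers_mul_le {U : Subgroup G} (hZ : U ≤ Subgroup.center G)
    {v u : G} (hu : u ∈ U) :
    Subgroup.zpowers (v * u) ≤ U ⊔ Subgroup.zpowers v := by
  rintro x ⟨n, rfl⟩
  have hc : Commute v u := Subgroup.mem_center_iff.mp (hZ hu) v
  have h : (v * u) ^ n = v ^ n * u ^ n := hc.mul_zpow n
  show (v * u) ^ n ∈ U ⊔ Subgroup.zpowers v
  rw [h]
  exact Subgroup.mul_mem _
    (Subgroup.mem_sup_right (Subgroup.zpow_mem _ (Subgroup.mem_zpowers v) n))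
    (Subgroup.mem_sup_left (Subgroup.zpow_mem _ hu n))

private lemma sup_zpowers_mul {U : Subgroup G} (hZ : U ≤ Subgroup.center G)
    {v u : G} (hu : u ∈ U) :
    U ⊔ Subgroup.zpowers (v * u) = U ⊔ Subgroup.zpowers v := by
  apply le_antisymm
  · exact sup_le le_sup_left (sup_zpowers_mul_le hZ hu)
  · refine sup_le le_sup_left ?_
    have h : v = (v * u) * u⁻¹ := by group
    calc Subgroup.zpowers v = Subgroup.zpowers ((v * u) * u⁻¹) := by rw [← h]
      _ ≤ U ⊔ Subgroup.zpowers (v * u) := sup_zpowers_mul_le hZ (Subgroup.inv_mem _ hu)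

private lemma map_center_le (N : Subgroup G) [N.Normal] {U : Subgroup G}
    (hZ : U ≤ Subgroup.center G) :
    U.map (QuotientGroup.mk' N) ≤ Subgroup.center (G ⧸ N) := by
  rintro _ ⟨u, hu, rfl⟩
  rw [Subgroup.mem_center_iff]
  intro g
  refine QuotientGroup.induction_on g fun y => ?_
  show (y : G ⧸ N) * (QuotientGroup.mk' N) u = (QuotientGroup.mk' N) u * (y : G ⧸ N)
  rw [QuotientGroup.mk'_apply, ← QuotientGroup.mk_mul, ← QuotientGroup.mk_mul,
    Subgroup.mem_center_iff.mp (hZ hu) y]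

private lemma cond_iff {U : Subgroup G} (hZ : U ≤ Subgroup.center G)
    {x : G ⧸ U} {v : G} (hv : QuotientGroup.mk v = x) :
    (∃ v' : G, QuotientGroup.mk v' = x ∧ IsCyclic ↥(U ⊔ Subgroup.zpowers v')) ↔
      IsCyclic ↥(U ⊔ Subgroup.zpowers v) := by
  constructor
  · rintro ⟨v', hv', hc⟩
    have h : (QuotientGroup.mk v' : G ⧸ U) = QuotientGroup.mk v := hv'.trans hv.symm
    have hmem : v'⁻¹ * v ∈ U := (QuotientGroup.eq (s := U)).mp h
    have hsup : U ⊔ Subgroup.zpowers v = U ⊔ Subgroup.zpowers v' := by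
      have hvv : v = v' * (v'⁻¹ * v) := by group
      conv_lhs => rw [hvv]
      exact sup_zpowers_mul hZ hmem
    rw [hsup]; exact hc
  · intro h; exact ⟨v, hv, h⟩

private lemma cyclic_of_quotient [Finite G]
    (hcomm : ∀ a b : G, a * b = b * a) {p : ℕ} (hp : p.Prime) (hG : IsPGroup p G)
    (N : Subgroup G) [N.Normal]
    (hN : ∀ n ∈ N, ∃ g : G, g ^ p = n)
    (hQ : IsCyclic (G ⧸ N)) : IsCyclic G := by
  obtain ⟨gbar, hgen⟩ := hQ.exists_generator
  obtain ⟨g, rfl⟩ := QuotientGroup.mk_surjective gbar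
  have hdec : ∀ x : G, ∃ (n : ℤ) (m : G), m ∈ N ∧ x = g ^ n * m := by
    intro x
    obtain ⟨n, hn⟩ := hgen (QuotientGroup.mk x)
    have hn' : (QuotientGroup.mk (g ^ n) : G ⧸ N) = QuotientGroup.mk x := by
      rw [QuotientGroup.mk_zpow]; exact hn
    refine ⟨n, (g ^ n)⁻¹ * x, (QuotientGroup.eq (s := N)).mp hn', by group⟩
  haveI hKnormal : (Subgroup.zpowers g).Normal := by
    refine ⟨fun n hn x => ?_⟩
    have h : x * n * x⁻¹ = n := by rw [hcomm x n]; group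
    rw [h]; exact hn
  set K := Subgroup.zpowers g with hKdef
  have hsurj : Function.Surjective (fun q : G ⧸ K => q ^ p) := by
    intro q
    obtain ⟨x, rfl⟩ := QuotientGroup.mk_surjective q
    obtain ⟨n, m, hm, rfl⟩ := hdec x
    obtain ⟨y, hy⟩ := hN m hm
    refine ⟨QuotientGroup.mk y, ?_⟩
    have h1 : (QuotientGroup.mk (g ^ n) : G ⧸ K) = 1 :=
      (QuotientGroup.eq_one_iff _).mpr (Subgroup.zpow_mem _ (Subgroup.mem_zpowers g) n)
    show (QuotientGroup.mk y : G ⧸ K) ^ p = _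
    rw [← QuotientGroup.mk_pow, hy, QuotientGroup.mk_mul, h1, one_mul]
  have hK : K = ⊤ := by
    by_contra hKtop
    obtain ⟨x, hx⟩ : ∃ x : G, x ∉ K := by
      by_contra hall
      push_neg at hall
      exact hKtop ((Subgroup.eq_top_iff' K).mpr hall)
    have hnt : (QuotientGroup.mk x : G ⧸ K) ≠ 1 := fun h =>
      hx ((QuotientGroup.eq_one_iff _).mp h)
    have hQp : IsPGroup p (G ⧸ K) := hG.to_quotient K
    obtain ⟨k, hk⟩ := hQp (QuotientGroup.mk x)
    have hord : orderOf (QuotientGroup.mk x : G ⧸ K) ∣ p ^ k := orderOf_dvd_of_pow_eq_one hk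
    obtain ⟨j, hjk, hj⟩ := (Nat.dvd_prime_pow hp).mp hord
    have hj0 : j ≠ 0 := by
      intro h
      rw [h, pow_zero, orderOf_eq_one_iff] at hj
      exact hnt hj
    set q' : G ⧸ K := (QuotientGroup.mk x) ^ (p ^ (j - 1)) with hq'
    have hordq' : orderOf q' = p := by
      rw [hq', orderOf_pow' _ (pow_ne_zero (j - 1) hp.ne_zero), hj,
        Nat.gcd_eq_right (pow_dvd_pow p (Nat.sub_le j 1)),
        Nat.pow_div (Nat.sub_le j 1) hp.pos]
      have h1 : j - (j - 1) = 1 := by omega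
      rw [h1, pow_one]
    have hq'p : q' ^ p = 1 := by rw [← hordq', pow_orderOf_eq_one]
    have hq'ne : q' ≠ 1 := by
      intro h
      rw [h, orderOf_one] at hordq'
      exact hp.one_lt.ne hordq'
    have hinj : Function.Injective (fun q : G ⧸ K => q ^ p) :=
      Finite.injective_iff_surjective.mpr hsurj
    exact hq'ne (hinj (by simpa using hq'p))
  exact ⟨⟨g, fun x => hK.ge (Subgroup.mem_top x)⟩⟩

end Aux

private lemma exists_pow_of_mem {V : Type*} [Group V] [Finite V] {p : ℕ}
    (hp : p.Prime) (hV : IsPGroup p V)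
    {U Up : Subgroup V} (hUc : IsCyclic U) (hUpU : Up ≤ U) (hne : ¬ U ≤ Up) :
    ∀ n ∈ Up, ∃ u ∈ U, u ^ p = n := by
  obtain ⟨g0, hg0⟩ := hUc.exists_generator
  set u0 : V := (g0 : V) with hu0
  have hU : U = Subgroup.zpowers u0 := by
    apply le_antisymm
    · intro x hx
      obtain ⟨k, hk⟩ := hg0 ⟨x, hx⟩
      exact ⟨k, congrArg Subtype.val hk⟩
    · rintro x ⟨k, rfl⟩
      exact Subgroup.zpow_mem _ g0.2 k
  intro n hn
  have hnU : n ∈ U := hUpU hn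
  have hpow : n ∈ Submonoid.powers u0 := by
    rw [mem_powers_iff_mem_zpowers]
    rw [hU] at hnU; exact hnU
  obtain ⟨j, hj⟩ := hpow
  have hj' : u0 ^ j = n := hj
  by_cases hpj : p ∣ j
  · obtain ⟨t, rfl⟩ := hpj
    refine ⟨u0 ^ t, ?_, ?_⟩
    · rw [hU]; exact ⟨(t : ℤ), by simp⟩
    · rw [← pow_mul, mul_comm t p]; exact hj'
  · exfalso
    have hcop : (orderOf u0).Coprime j := by
      obtain ⟨k, hk⟩ := hV u0
      have hdvd : orderOf u0 ∣ p ^ k := orderOf_dvd_of_pow_eq_one hk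
      exact Nat.Coprime.coprime_dvd_left hdvd
        (Nat.Coprime.pow_left k ((Nat.Prime.coprime_iff_not_dvd hp).mpr hpj))
  -- n = u0 ^ j generates the same subgroup as u0
    have hordn : orderOf n = orderOf u0 := by
      rw [← hj']; exact hcop.orderOf_pow
    have hle : Subgroup.zpowers n ≤ Subgroup.zpowers u0 := by
      rintro x ⟨m, rfl⟩
      refine ⟨(j : ℤ) * m, ?_⟩
      show u0 ^ ((j : ℤ) * m) = n ^ m
      rw [zpow_mul, zpow_natCast, hj']
    have heq : Subgroup.zpowers n = Subgroup.zpowers u0 := by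
      apply Subgroup.eq_of_le_of_card_ge hle
      rw [Nat.card_zpowers, Nat.card_zpowers, hordn]
    have hUle : U ≤ Up := by
      rw [hU, ← heq]
      rintro x ⟨m, rfl⟩
      exact Subgroup.zpow_mem _ hn m
    exact hne hUle

theorem artin_stmt15 {V : Type*} [Group V] [Finite V] {p : ℕ}
    (hp : p.Prime) (hV : IsPGroup p V)
    (U : Subgroup V) (hZ : U ≤ Subgroup.center V) (hUc : IsCyclic U)
    (hUp : p ∣ Nat.card U)
    (Up : Subgroup V) [Up.Normal] (hUpU : Up ≤ U) (hUpidx : Up.relIndex U = p) :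
    Nat.card {x : V ⧸ U | ∃ v : V, QuotientGroup.mk v = x ∧
        IsCyclic ↥(U ⊔ Subgroup.zpowers v)} =
      Nat.card {y : (V ⧸ Up) ⧸ (U.map (QuotientGroup.mk' Up)) |
        ∃ w : V ⧸ Up, QuotientGroup.mk w = y ∧
          IsCyclic ↥((U.map (QuotientGroup.mk' Up)) ⊔ Subgroup.zpowers w)} := by
  haveI hUnormal : U.Normal := normal_of_central hZ
  have hne : ¬ U ≤ Up := by
    intro h
    have h1 := Subgroup.relIndex_eq_one.mpr h
    rw [hUpidx] at h1
    exact hp.one_lt.ne' h1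
  have hZbar : U.map (QuotientGroup.mk' Up) ≤ Subgroup.center (V ⧸ Up) :=
    map_center_le Up hZ
  have crux : ∀ v : V, IsCyclic ↥(U ⊔ Subgroup.zpowers v) ↔
      IsCyclic ↥((U.map (QuotientGroup.mk' Up)) ⊔
        Subgroup.zpowers (QuotientGroup.mk v : V ⧸ Up)) := by
    intro v
    have hmap : (U ⊔ Subgroup.zpowers v).map (QuotientGroup.mk' Up) =
        (U.map (QuotientGroup.mk' Up)) ⊔
          Subgroup.zpowers (QuotientGroup.mk v : V ⧸ Up) := by
      rw [Subgroup.map_sup, MonoidHom.map_zpowers]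
      rfl
    constructor
    · intro h
      rw [← hmap]
      exact isCyclic_of_surjective _ ((QuotientGroup.mk' Up).subgroupMap_surjective _)
    · intro h
      set H := U ⊔ Subgroup.zpowers v with hHdef
      have hUleH : U ≤ H := le_sup_left
      have hmemdec : ∀ x : V, x ∈ H → ∃ u ∈ U, ∃ k : ℤ, u * v ^ k = x := by
        intro x hx
        have hx' : x ∈ (U : Set V) * (Subgroup.zpowers v : Set V) := by
          rw [← Subgroup.normal_mul]; exact hx
        obtain ⟨u, hu, w, hw, hxe⟩ := hx'
        obtain ⟨k, hk⟩ := hw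
        have hk' : v ^ k = w := hk
        exact ⟨u, hu, k, by rw [hk']; exact hxe⟩
      have hcomm : ∀ a b : ↥H, a * b = b * a := by
        rintro ⟨a, ha⟩ ⟨b, hb⟩
        obtain ⟨u1, hu1, k1, rfl⟩ := hmemdec a ha
        obtain ⟨u2, hu2, k2, rfl⟩ := hmemdec b hb
        apply Subtype.ext
        show (u1 * v ^ k1) * (u2 * v ^ k2) = (u2 * v ^ k2) * (u1 * v ^ k1)
        have hc1 : ∀ x : V, Commute u1 x := fun x =>
          (Subgroup.mem_center_iff.mp (hZ hu1) x).symm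
        have hc2 : ∀ x : V, Commute u2 x := fun x =>
          (Subgroup.mem_center_iff.mp (hZ hu2) x).symm
        have hcv : Commute (v ^ k1) (v ^ k2) := (Commute.refl v).zpow_zpow k1 k2
        exact ((hc1 (u2 * v ^ k2)).mul_left
          (((hc2 (v ^ k1)).symm).mul_right hcv)).eq
      have hHp : IsPGroup p ↥H := hV.to_subgroup H
      set f : ↥H →* V ⧸ Up := (QuotientGroup.mk' Up).comp H.subtype with hf
      have hker : f.ker = Up.subgroupOf H := by
        rw [hf, ← MonoidHom.comap_ker, QuotientGroup.ker_mk']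
        rfl
      have hrange : f.range = (U.map (QuotientGroup.mk' Up)) ⊔
          Subgroup.zpowers (QuotientGroup.mk v : V ⧸ Up) := by
        rw [hf, MonoidHom.range_comp, Subgroup.range_subtype, hmap]
      haveI : (Up.subgroupOf H).Normal := by
        refine ⟨fun n hn x => ?_⟩
        have h' : x * n * x⁻¹ = n := by rw [hcomm x n]; group
        rw [h']; exact hn
      have hQc : IsCyclic (↥H ⧸ Up.subgroupOf H) := by
        have hcr : IsCyclic ↥f.range := by rw [hrange]; exact h
        have e2 := QuotientGroup.quotientKerEquivRange f
        have h3 : IsCyclic (↥H ⧸ f.ker) :=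
          isCyclic_of_surjective e2.symm e2.symm.surjective
        have e3 := QuotientGroup.quotientMulEquivOfEq hker
        exact isCyclic_of_surjective e3 e3.surjective
      have hN : ∀ n ∈ Up.subgroupOf H, ∃ g : ↥H, g ^ p = n := by
        intro n hn
        obtain ⟨u, huU, hup⟩ := exists_pow_of_mem hp hV hUc hUpU hne (n : V)
          (Subgroup.mem_subgroupOf.mp hn)
        refine ⟨⟨u, hUleH huU⟩, ?_⟩
        apply Subtype.ext
        rw [SubmonoidClass.coe_pow]
        exact hup
      exact cyclic_of_quotient hcomm hp hHp (Up.subgroupOf H) hN hQc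
  let e := QuotientGroup.quotientQuotientEquivQuotient Up U hUpU
  refine (Nat.card_congr (Equiv.subtypeEquiv e.toEquiv ?_)).symm
  intro y
  obtain ⟨w, hw⟩ := QuotientGroup.mk_surjective y
  obtain ⟨v, hv⟩ := QuotientGroup.mk_surjective w
  have hey : e.toEquiv y = (QuotientGroup.mk v : V ⧸ U) := by
    rw [← hw, ← hv]
    exact QuotientGroup.quotientQuotientEquivQuotientAux_mk_mk Up U hUpU v
  show (∃ w' : V ⧸ Up, QuotientGroup.mk w' = y ∧
      IsCyclic ↥((U.map (QuotientGroup.mk' Up)) ⊔ Subgroup.zpowers w')) ↔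
    (∃ v' : V, QuotientGroup.mk v' = e.toEquiv y ∧
      IsCyclic ↥(U ⊔ Subgroup.zpowers v'))
  rw [cond_iff hZbar hw, cond_iff hZ hey.symm, ← hv]
  exact (crux v).symm
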